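/- The group L = ⟨ a, t ∣ (at)³ = a³, [[t,a],t] = a³ ⟩ is not nilpotent. -/

import Mathlib

set_option maxRecDepth 4000


/-- The relations of the presented group
`L = ⟨ a, t ∣ (at)³ = a³, [[t,a],t] = a³ ⟩`, with `a = FreeGroup.of 0`,
`t = FreeGroup.of 1`, and `[x,y] = x⁻¹y⁻¹xy`. -/
def mainlineLimitRels : Set (FreeGroup (Fin 2)) :=
  { ((FreeGroup.of 0 : FreeGroup (Fin 2)) * FreeGroup.of 1) ^ 3 *
      ((FreeGroup.of 0 : FreeGroup (Fin 2)) ^ 3)⁻¹,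
    (((FreeGroup.of 1 : FreeGroup (Fin 2))⁻¹ * (FreeGroup.of 0)⁻¹ *
        FreeGroup.of 1 * FreeGroup.of 0)⁻¹ * (FreeGroup.of 1)⁻¹ *
      ((FreeGroup.of 1)⁻¹ * (FreeGroup.of 0)⁻¹ * FreeGroup.of 1 * FreeGroup.of 0) *
      FreeGroup.of 1) * ((FreeGroup.of 0 : FreeGroup (Fin 2)) ^ 3)⁻¹ }

open scoped commutatorElement

/-- a = (1 2 3) in S₄ -/
def permA : Equiv.Perm (Fin 4) := Equiv.swap 1 3 * Equiv.swap 1 2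
/-- t = (0 1)(2 3) in S₄ -/
def permT : Equiv.Perm (Fin 4) := Equiv.swap 0 1 * Equiv.swap 2 3

def fmap : Fin 2 → Equiv.Perm (Fin 4) := ![permA, permT]

lemma fmap_rels : ∀ r ∈ mainlineLimitRels, FreeGroup.lift fmap r = 1 := by
  intro r hr
  rcases hr with h | h <;> subst h <;>
    simp only [map_mul, map_inv, map_pow, FreeGroup.lift_apply_of] <;>
    show _ = (1 : Equiv.Perm (Fin 4)) <;> decide

def phi : PresentedGroup mainlineLimitRels →* Equiv.Perm (Fin 4) :=
  PresentedGroup.toGroup fmap_rels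

def u1 : Equiv.Perm (Fin 4) := permT
def u2 : Equiv.Perm (Fin 4) := ⁅u1, permA⁆
def u3 : Equiv.Perm (Fin 4) := ⁅u2, permA⁆

/-- The group `L = ⟨ a, t ∣ (at)³ = a³, [[t,a],t] = a³ ⟩` is not nilpotent. -/
theorem stmt_10 : ¬ Group.IsNilpotent (PresentedGroup mainlineLimitRels) := by
  intro h
  set L := PresentedGroup mainlineLimitRels
  have key : ∀ n, u1 ∈ (Subgroup.lowerCentralSeries (⊤ : Subgroup L) n).map phi ∧
      u2 ∈ (Subgroup.lowerCentralSeries (⊤ : Subgroup L) n).map phi ∧ u3 ∈ (Subgroup.lowerCentralSeries (⊤ : Subgroup L) n).map phi := by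
    intro n
    induction n with
    | zero =>
      have hA : phi (PresentedGroup.of 0) = permA := PresentedGroup.toGroup.of fmap_rels
      have hT : phi (PresentedGroup.of 1) = permT := PresentedGroup.toGroup.of fmap_rels
      refine ⟨⟨PresentedGroup.of 1, Subgroup.mem_top _, hT⟩,
        ⟨⁅(PresentedGroup.of 1 : L), (PresentedGroup.of 0 : L)⁆, Subgroup.mem_top _, ?_⟩,
        ⟨⁅⁅(PresentedGroup.of 1 : L), (PresentedGroup.of 0 : L)⁆, (PresentedGroup.of 0 : L)⁆,
          Subgroup.mem_top _, ?_⟩⟩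
      · rw [map_commutatorElement, hA, hT]; rfl
      · rw [map_commutatorElement, map_commutatorElement, hA, hT]; rfl
    | succ n ih =>
      obtain ⟨⟨y1, hy1, hy1'⟩, ⟨y2, hy2, hy2'⟩, ⟨y3, hy3, hy3'⟩⟩ := ih
      have hA : phi (PresentedGroup.of 0) = permA := PresentedGroup.toGroup.of fmap_rels
      have step : ∀ y : L, y ∈ Subgroup.lowerCentralSeries (⊤ : Subgroup L) n →
          ⁅y, (PresentedGroup.of 0 : L)⁆ ∈ Subgroup.lowerCentralSeries (⊤ : Subgroup L) (n+1) := by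
        intro y hy
        rw [Subgroup.lowerCentralSeries_succ, Subgroup.commutator_def]
        exact Subgroup.subset_closure ⟨y, hy, PresentedGroup.of 0, Subgroup.mem_top _, rfl⟩
      have e1 : u1 = ⁅u3, permA⁆ := by show u1 = _ * _ * _ * _; decide
      have e2 : u2 = ⁅u1, permA⁆ := rfl
      have e3 : u3 = ⁅u2, permA⁆ := rfl
      refine ⟨⟨⁅y3, (PresentedGroup.of 0 : L)⁆, step _ hy3, ?_⟩,
        ⟨⁅y1, (PresentedGroup.of 0 : L)⁆, step _ hy1, ?_⟩,
        ⟨⁅y2, (PresentedGroup.of 0 : L)⁆, step _ hy2, ?_⟩⟩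
      · rw [map_commutatorElement, hA, hy3', ← e1]
      · rw [map_commutatorElement, hA, hy1', ← e2]
      · rw [map_commutatorElement, hA, hy2', ← e3]
  obtain ⟨n, hn⟩ := nilpotent_iff_lowerCentralSeries.mp h
  obtain ⟨y, hy, hy'⟩ := (key n).1
  rw [hn] at hy
  simp only [Subgroup.coe_bot, Set.mem_singleton_iff] at hy
  subst hy
  simp only [map_one] at hy'
  exact absurd hy'.symm (by decide)
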